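/- Securing stub ASes with simplex S*BGP (outgoing-only security) instead of full S*BGP does not change the routing outcome of any non-stub AS: because a stub AS exports no routes learned from neighbors, its route selection has no effect on the stable routes chosen by any other AS in the network, in any of the three security models. -/

import Mathlib

open scoped Classical

namespace SBGP

/-- Business relationship of a neighbor, from the point of view of a given AS. -/
inductive Rel
  | customer
  | peer
  | provider
deriving DecidableEq

/-- The three positions at which the secure-route preference step can be inserted. -/
inductive SecModel
  | first
  | second
  | third
deriving DecidableEq

/-- An AS-level graph with business relationships on its edges. -/
structure ASGraph (V : Type*) where
  adj : V → V → Bool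
  /-- `rel u v` is the relationship of `v` as seen from `u`
      (`customer` means `v` is `u`'s customer, etc.). -/
  rel : V → V → Rel
  adj_symm : ∀ u v, adj u v = adj v u
  adj_irrefl : ∀ v, adj v v = false
  rel_consistent : ∀ u v, adj u v = true →
    ((rel u v = Rel.customer ↔ rel v u = Rel.provider) ∧
     (rel u v = Rel.peer ↔ rel v u = Rel.peer))

variable {V : Type*}

def lpRank : Rel → ℕ
  | Rel.customer => 0
  | Rel.peer => 1
  | Rel.provider => 2

/-- The relationship of the next hop of a route (`none` for trivial routes). -/
def nextRel (G : ASGraph V) : List V → Option Rel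
  | a :: b :: _ => some (G.rel a b)
  | _ => none

/-- Local-preference value of a route (customer < peer < provider). -/
def lpVal (G : ASGraph V) : List V → ℕ
  | a :: b :: _ => lpRank (G.rel a b)
  | _ => 0

/-- `R` is a (nonempty) path in `G`. -/
def IsPath (G : ASGraph V) : List V → Prop
  | [] => False
  | [_] => True
  | a :: b :: rest => G.adj a b = true ∧ IsPath G (b :: rest)

/-- `R` is a simple route in `G` ending at `d`. -/
def IsRouteTo (G : ASGraph V) (R : List V) (d : V) : Prop :=
  R.Nodup ∧ IsPath G R ∧ R.getLast? = some d

/-- The export rule (Ex) along a route `a :: b :: c :: …`: each internal AS `b`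
announces its route (with next hop `c`) to `a` only if that route is a customer
route of `b`, or `a` is `b`'s customer. -/
def ExportOK (G : ASGraph V) : List V → Prop
  | a :: b :: c :: rest =>
      (G.rel b c = Rel.customer ∨ G.rel b a = Rel.customer) ∧
      ExportOK G (b :: c :: rest)
  | _ => True

/-- A route is secure iff every AS on it has deployed S*BGP and it does not
contain the attacker (the bogus route is insecure even if the attacker is in `S`). -/
def SecureRoute (S : Finset V) (m : Option V) (R : List V) : Prop :=
  (∀ v ∈ R, v ∈ S) ∧ (∀ m', m = some m' → m' ∉ R)

/-- A legitimate route: ends at the destination `d` and avoids the attacker. -/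
def LegitRoute (m : Option V) (d : V) (R : List V) : Prop :=
  R.getLast? = some d ∧ ∀ m', m = some m' → m' ∉ R

/-- Perceivable routes at `s` for destination `d` when the (optional) attacker `m`
announces the bogus path "m,d": either a genuine export-compliant route to `d`
avoiding `m`, or an export-compliant route to `m` extended by `m`'s claimed
(possibly nonexistent) edge to `d`. -/
def Perceivable (G : ASGraph V) (m : Option V) (d : V) (s : V) (R : List V) : Prop :=
  R.head? = some s ∧
  ((IsRouteTo G R d ∧ ExportOK G R ∧ ∀ m', m = some m' → m' ∉ R) ∨
   (∃ m' R', m = some m' ∧ R = R' ++ [d] ∧ IsRouteTo G R' m' ∧ d ∉ R' ∧ ExportOK G R'))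

/-- The rank of a route (smaller is better), encoding lexicographically the
ranking steps of the given security model: LP (customer > peer > provider),
SP (shorter > longer) and SecP (secure > insecure), in the order determined by
the model.  All components are `< Fintype.card V + 2`, so the encoding is
faithful on simple routes. -/
noncomputable def rankNat [Fintype V] (G : ASGraph V) (S : Finset V) (m : Option V)
    (mdl : SecModel) (R : List V) : ℕ :=
  let B := Fintype.card V + 2
  let lp := lpVal G R
  let len := R.length
  let sec : ℕ := if SecureRoute S m R then 0 else 1
  match mdl with
  | SecModel.first => sec * B * B + lp * B + len
  | SecModel.second => lp * B * B + sec * B + len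
  | SecModel.third => lp * B * B + len * B + sec

/-- `n` exports the route `R` (its currently selected route) to neighbor `s`:
always if `R` is a customer route of `n` or `n` originates `R`; otherwise only
if `s` is `n`'s customer. -/
def exportsTo (G : ASGraph V) (n s : V) : List V → Prop
  | _ :: c :: _ => G.rel n c = Rel.customer ∨ G.rel n s = Rel.customer
  | _ => True

/-- Routes available to `s` given the current selections `σ` of all ASes:
routes exported by neighbors (with BGP loop detection), together with the
attacker's bogus announcement "m,d" to each of its neighbors. -/
def Avail (G : ASGraph V) (m : Option V) (d : V) (σ : V → List V) (s : V)
    (R : List V) : Prop :=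
  (∃ n, G.adj s n = true ∧ (∀ m', m = some m' → n ≠ m') ∧ σ n ≠ [] ∧
      (σ n).head? = some n ∧ s ∉ σ n ∧ exportsTo G n s (σ n) ∧ R = s :: σ n) ∨
  (∃ m', m = some m' ∧ G.adj s m' = true ∧ s ≠ d ∧ R = [s, m', d])

/-- A stable routing state for destination `d`, secure deployment `S`,
attacker `m`, security model `mdl` and tiebreak `tb`: every AS (other than the
destination and the attacker) selects the best available route, where ties in
rank are broken by the strict tiebreak `tb`. -/
def Stable [Fintype V] (G : ASGraph V) (tb : V → List V → ℕ) (S : Finset V)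
    (m : Option V) (d : V) (mdl : SecModel) (σ : V → List V) : Prop :=
  σ d = [d] ∧
  (∀ m', m = some m' → σ m' = []) ∧
  ∀ s, s ≠ d → (∀ m', m = some m' → s ≠ m') →
    ((σ s = [] ∧ ∀ R, ¬ Avail G m d σ s R) ∨
     (Avail G m d σ s (σ s) ∧
      ∀ R, Avail G m d σ s R → R ≠ σ s →
        rankNat G S m mdl (σ s) < rankNat G S m mdl R ∨
        (rankNat G S m mdl (σ s) = rankNat G S m mdl R ∧ tb s (σ s) < tb s R)))

/-- `s` is happy: it selects a legitimate route to `d`, avoiding the attacker. -/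
def Happy (m : Option V) (d : V) (σ : V → List V) (s : V) : Prop :=
  σ s ≠ [] ∧ (σ s).getLast? = some d ∧ ∀ m', m = some m' → m' ∉ σ s

/-- The set of most-preferred perceivable routes of `s` (before the tiebreak step). -/
def BPR [Fintype V] (G : ASGraph V) (S : Finset V) (m : Option V) (d : V)
    (mdl : SecModel) (s : V) (R : List V) : Prop :=
  Perceivable G m d s R ∧
  ∀ R', Perceivable G m d s R' → rankNat G S m mdl R ≤ rankNat G S m mdl R'

/-- The number of happy source ASes (sources other than `m` and `d`). -/
noncomputable def happyCount [Fintype V] [DecidableEq V] (m d : V)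
    (σ : V → List V) : ℕ :=
  (Finset.univ.filter fun s => s ≠ m ∧ s ≠ d ∧ Happy (some m) d σ s).card

/-- The customer-provider hierarchy is acyclic. -/
def Hierarchy (G : ASGraph V) : Prop :=
  ∃ h : V → ℕ, ∀ u v, G.adj u v = true → G.rel u v = Rel.customer → h v < h u

/-- The tiebreak of every AS is deterministic (injective on routes). -/
def InjTB (tb : V → List V → ℕ) : Prop :=
  ∀ s, Function.Injective (tb s)

end SBGP
namespace SBGP

section Aux

variable {V : Type*}

lemma secure_mono {S : Finset V} {m : Option V} {s : V} {L : List V}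
    (h : SecureRoute S m (s :: L)) : SecureRoute S m L := by
  refine ⟨fun v hv => h.1 v (List.mem_cons_of_mem _ hv), fun m' hm' hmem => h.2 m' hm' (List.mem_cons_of_mem _ hmem)⟩

lemma rank_agree [Fintype V] [DecidableEq V] (G : ASGraph V) (S : Finset V) (m : Option V)
    (mdl : SecModel) (t : V) {R : List V} (ht : t ∉ R) :
    rankNat G S m mdl R = rankNat G (S.erase t) m mdl R := by
  have hsec : SecureRoute S m R ↔ SecureRoute (S.erase t) m R := by
    constructor <;> rintro ⟨h1, h2⟩ <;> refine ⟨fun v hv => ?_, h2⟩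
    · exact Finset.mem_erase.2 ⟨fun h => ht (h ▸ hv), h1 v hv⟩
    · exact (Finset.mem_erase.1 (h1 v hv)).2
  simp only [rankNat]
  rw [if_congr hsec rfl rfl]

lemma rank_mono [Fintype V] (G : ASGraph V) (S : Finset V) (m : Option V) (mdl : SecModel)
    (s n : V) (tl : List V) (hadj : G.adj s n = true)
    (hexp : exportsTo G n s (n :: tl)) :
    rankNat G S m mdl (n :: tl) < rankNat G S m mdl (s :: n :: tl) := by
  set B := Fintype.card V + 2 with hB
  have hB2 : 2 ≤ B := by omega
  have hlp : lpVal G (n :: tl) ≤ lpVal G (s :: n :: tl) := by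
    cases tl with
    | nil => exact Nat.zero_le _
    | cons c tl' =>
      rcases hexp with h | h
      · simp [lpVal, h, lpRank]
      · have hadj' : G.adj n s = true := by rw [G.adj_symm]; exact hadj
        have hprov : G.rel s n = Rel.provider := ((G.rel_consistent n s hadj').1).1 h
        simp only [lpVal, hprov]
        cases hrel : G.rel n c <;> simp [lpRank]
  have hsec : (if SecureRoute S m (n :: tl) then (0:ℕ) else 1) ≤
      (if SecureRoute S m (s :: n :: tl) then (0:ℕ) else 1) := by
    split_ifs with h1 h2 h3
    · exact le_refl _
    · exact Nat.zero_le _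
    · exact absurd (secure_mono h3) h1
    · exact le_refl _
  have hlen : (s :: n :: tl).length = (n :: tl).length + 1 := List.length_cons
  have hsec1 : (if SecureRoute S m (n :: tl) then (0:ℕ) else 1) ≤ 1 := by
    split_ifs <;> omega
  cases mdl <;> simp only [rankNat, hlen] <;>
  · have m1 : lpVal G (n :: tl) * B ≤ lpVal G (s :: n :: tl) * B :=
      Nat.mul_le_mul_right _ hlp
    have m2 : lpVal G (n :: tl) * B * B ≤ lpVal G (s :: n :: tl) * B * B :=
      Nat.mul_le_mul_right _ m1
    have m3 : (if SecureRoute S m (n :: tl) then (0:ℕ) else 1) * B ≤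
        (if SecureRoute S m (s :: n :: tl) then (0:ℕ) else 1) * B :=
      Nat.mul_le_mul_right _ hsec
    have m4 : (if SecureRoute S m (n :: tl) then (0:ℕ) else 1) * B * B ≤
        (if SecureRoute S m (s :: n :: tl) then (0:ℕ) else 1) * B * B :=
      Nat.mul_le_mul_right _ m3
    have m5 : ((n :: tl).length + 1) * B = (n :: tl).length * B + B := by ring
    simp only [← hB]
    linarith

lemma stable_shape [Fintype V] {G : ASGraph V} {tb : V → List V → ℕ} {S : Finset V}
    {m d : V} {mdl : SecModel} {σ : V → List V}
    (h : Stable G tb S (some m) d mdl σ) {v : V} (hvd : v ≠ d) (hvm : v ≠ m)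
    (hne : σ v ≠ []) :
    Avail G (some m) d σ v (σ v) ∧
      ∀ R, Avail G (some m) d σ v R → R ≠ σ v →
        rankNat G S (some m) mdl (σ v) < rankNat G S (some m) mdl R ∨
        (rankNat G S (some m) mdl (σ v) = rankNat G S (some m) mdl R ∧
          tb v (σ v) < tb v R) := by
  rcases h.2.2 v hvd (fun m' e => (Option.some.inj e) ▸ hvm) with h1 | h2
  · exact absurd h1.1 hne
  · exact h2

lemma stub_no_export [Fintype V] {G : ASGraph V} {tb : V → List V → ℕ} {S : Finset V}
    {m d t : V} {mdl : SecModel} {σ : V → List V}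
    (h : Stable G tb S (some m) d mdl σ)
    (hstub : ∀ u, G.adj t u = true → G.rel t u ≠ Rel.customer)
    (hdt : d ≠ t) (hmt : m ≠ t) {s : V} (hadj : G.adj s t = true)
    (hne : σ t ≠ []) : ¬ exportsTo G t s (σ t) := by
  have hts : G.adj t s = true := by rw [G.adj_symm]; exact hadj
  obtain ⟨hav, -⟩ := stable_shape h (Ne.symm hdt) (Ne.symm hmt) hne
  rcases hav with ⟨n, hadjtn, hnm, hnne, hhead, hnotmem, hexp2, hR⟩ |
      ⟨m', hm', hadjm, htd, hR⟩
  · obtain ⟨tl, htl⟩ : ∃ tl, σ n = n :: tl := by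
      cases hsn : σ n with
      | nil => rw [hsn] at hhead; simp at hhead
      | cons a b =>
        rw [hsn] at hhead; simp at hhead
        exact ⟨b, by rw [hhead]⟩
    rw [hR, htl]
    rintro (hc | hc)
    · exact hstub n hadjtn hc
    · exact hstub s hts hc
  · rw [hR]
    rintro (hc | hc)
    · exact hstub m' hadjm hc
    · exact hstub s hts hc

lemma tfree [Fintype V] {G : ASGraph V} {tb : V → List V → ℕ} {S : Finset V}
    {m d t : V} {mdl : SecModel} {σ : V → List V}
    (h : Stable G tb S (some m) d mdl σ)
    (hstub : ∀ u, G.adj t u = true → G.rel t u ≠ Rel.customer)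
    (hdt : d ≠ t) (hmt : m ≠ t) :
    ∀ v, v ≠ t → t ∉ σ v := by
  have main : ∀ L : ℕ, ∀ v, v ≠ t → (σ v).length ≤ L → t ∉ σ v := by
    intro L
    induction L with
    | zero =>
      intro v hv hlen
      have : σ v = [] := List.eq_nil_of_length_eq_zero (Nat.le_zero.1 hlen)
      simp [this]
    | succ L ih =>
      intro v hv hlen
      by_cases hvd : v = d
      · rw [hvd, h.1]; simp; exact fun e => hdt e.symm
      by_cases hvm : v = m
      · rw [hvm, h.2.1 m rfl]; simp
      by_cases hne : σ v = []
      · simp [hne]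
      obtain ⟨hav, -⟩ := stable_shape h hvd hvm hne
      rcases hav with ⟨n, hadj, hnm, hnne, hhead, hmem, hexp, hR⟩ |
          ⟨m', hm', hadjm, hvd', hR⟩
      · have hnt : n ≠ t := by
          rintro rfl
          exact stub_no_export h hstub hdt hmt hadj hnne hexp
        rw [hR]
        intro hmem'
        rcases List.mem_cons.1 hmem' with e | hmem''
        · exact hv e.symm
        · have hlen' : (σ n).length ≤ L := by
            rw [hR] at hlen; simp at hlen; omega
          exact ih n hnt hlen' hmem''
      · have hm'm : m' = m := (Option.some.inj hm').symm
        subst hm'm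
        rw [hR]
        simp only [List.mem_cons, List.mem_singleton, List.not_mem_nil]
        push_neg
        exact ⟨fun e => hv e.symm, fun e => hmt e.symm, fun e => hdt e.symm, trivial⟩
  intro v hv; exact main (σ v).length v hv le_rfl

lemma oneStep [Fintype V] {G : ASGraph V} {tb : V → List V → ℕ} {t : V}
    (hstub : ∀ u, G.adj t u = true → G.rel t u ≠ Rel.customer)
    {mdl : SecModel} {m d : V} (hdt : d ≠ t) (hmt : m ≠ t)
    {S₁ S₂ : Finset V} {σ₁ σ₂ : V → List V}
    (h₁ : Stable G tb S₁ (some m) d mdl σ₁)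
    (h₂ : Stable G tb S₂ (some m) d mdl σ₂)
    (hagree : ∀ R : List V, t ∉ R →
      rankNat G S₁ (some m) mdl R = rankNat G S₂ (some m) mdl R)
    (K : ℕ)
    (IH : ∀ w, w ≠ t →
      ((σ₁ w ≠ [] ∧ rankNat G S₁ (some m) mdl (σ₁ w) < K) ∨
       (σ₂ w ≠ [] ∧ rankNat G S₂ (some m) mdl (σ₂ w) < K)) → σ₁ w = σ₂ w)
    {v : V} (hvt : v ≠ t) (hne : σ₁ v ≠ [])
    (hK : rankNat G S₁ (some m) mdl (σ₁ v) ≤ K) :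
    σ₁ v = σ₂ v := by
  by_cases hvd : v = d
  · subst hvd; rw [h₁.1, h₂.1]
  by_cases hvm : v = m
  · rw [hvm] at hne; exact absurd (h₁.2.1 m rfl) hne
  obtain ⟨hav₁, hmin₁⟩ := stable_shape h₁ hvd hvm hne
  -- σ₁ v is available in state 2
  have havail2 : Avail G (some m) d σ₂ v (σ₁ v) := by
    rcases hav₁ with ⟨n, hadj, hnm, hnne, hhead, hmem, hexp, hR⟩ | hfake
    · have hnt : n ≠ t := by
        rintro rfl
        exact stub_no_export h₁ hstub hdt hmt hadj hnne hexp
      obtain ⟨tl, htl⟩ : ∃ tl, σ₁ n = n :: tl := by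
        cases hsn : σ₁ n with
        | nil => rw [hsn] at hhead; simp at hhead
        | cons a b => rw [hsn] at hhead; simp at hhead; exact ⟨b, by rw [hhead]⟩
      have hlt : rankNat G S₁ (some m) mdl (σ₁ n) < rankNat G S₁ (some m) mdl (σ₁ v) := by
        rw [hR, htl]
        exact rank_mono G S₁ (some m) mdl v n tl hadj (htl ▸ hexp)
      have heq : σ₁ n = σ₂ n := IH n hnt (Or.inl ⟨hnne, lt_of_lt_of_le hlt hK⟩)
      exact Or.inl ⟨n, hadj, hnm, heq ▸ hnne, heq ▸ hhead, heq ▸ hmem, heq ▸ hexp, heq ▸ hR⟩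
    · exact Or.inr hfake
  rcases h₂.2.2 v hvd (fun m' e => (Option.some.inj e) ▸ hvm) with hbad | ⟨hav₂, hmin₂⟩
  · exact absurd havail2 (hbad.2 _)
  by_cases heqv : σ₁ v = σ₂ v
  · exact heqv
  have hcmp₂ := hmin₂ (σ₁ v) havail2 heqv
  have ht1 : t ∉ σ₁ v := tfree h₁ hstub hdt hmt v hvt
  have ht2 : t ∉ σ₂ v := tfree h₂ hstub hdt hmt v hvt
  have hR12 : rankNat G S₂ (some m) mdl (σ₂ v) ≤ rankNat G S₂ (some m) mdl (σ₁ v) := by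
    rcases hcmp₂ with h | h
    · exact le_of_lt h
    · exact le_of_eq h.1
  have hK₂ : rankNat G S₂ (some m) mdl (σ₂ v) ≤ K := by
    calc rankNat G S₂ (some m) mdl (σ₂ v) ≤ rankNat G S₂ (some m) mdl (σ₁ v) := hR12
    _ = rankNat G S₁ (some m) mdl (σ₁ v) := (hagree _ ht1).symm
    _ ≤ K := hK
  -- σ₂ v is available in state 1
  have havail1 : Avail G (some m) d σ₁ v (σ₂ v) := by
    rcases hav₂ with ⟨n, hadj, hnm, hnne, hhead, hmem, hexp, hR⟩ | hfake
    · have hnt : n ≠ t := by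
        rintro rfl
        exact stub_no_export h₂ hstub hdt hmt hadj hnne hexp
      obtain ⟨tl, htl⟩ : ∃ tl, σ₂ n = n :: tl := by
        cases hsn : σ₂ n with
        | nil => rw [hsn] at hhead; simp at hhead
        | cons a b => rw [hsn] at hhead; simp at hhead; exact ⟨b, by rw [hhead]⟩
      have hlt : rankNat G S₂ (some m) mdl (σ₂ n) < rankNat G S₂ (some m) mdl (σ₂ v) := by
        rw [hR, htl]
        exact rank_mono G S₂ (some m) mdl v n tl hadj (htl ▸ hexp)
      have heq : σ₁ n = σ₂ n := IH n hnt (Or.inr ⟨hnne, lt_of_lt_of_le hlt hK₂⟩)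
      refine Or.inl ⟨n, hadj, hnm, ?_, ?_, ?_, ?_, ?_⟩ <;> rw [heq] <;> assumption
    · exact Or.inr hfake
  have hcmp₁ := hmin₁ (σ₂ v) havail1 (fun e => heqv e.symm)
  have e1 : rankNat G S₁ (some m) mdl (σ₁ v) = rankNat G S₂ (some m) mdl (σ₁ v) :=
    hagree _ ht1
  have e2 : rankNat G S₁ (some m) mdl (σ₂ v) = rankNat G S₂ (some m) mdl (σ₂ v) :=
    hagree _ ht2
  rcases hcmp₁ with hlt1 | ⟨heq1, htb1⟩ <;> rcases hcmp₂ with hlt2 | ⟨heq2, htb2⟩ <;> omega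

end Aux


/-- **Simplex S*BGP at stubs does not affect the rest of the network.**
A stub AS `t` (an AS with no customers) never re-exports learned routes, so
whether or not `t` itself is in the secure deployment (full S*BGP vs. simplex,
i.e. treating its incoming routes as insecure) changes only `t`'s own route
selection: for any destination `d ≠ t`, attacker `m ≠ t` and secure set `S`,
the stable routing states for `S` and for `S` with `t` removed agree at every
AS other than `t`, in any of the three security models. -/
theorem simplex_stub_no_effect {V : Type*} [Fintype V] [DecidableEq V]
    (G : ASGraph V) (tb : V → List V → ℕ) (hinj : InjTB tb)
    (t : V) (hstub : ∀ u, G.adj t u = true → G.rel t u ≠ Rel.customer)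
    (mdl : SecModel) (m d : V) (hdt : d ≠ t) (hmt : m ≠ t) (hmd : m ≠ d)
    (S : Finset V) (σ σ' : V → List V)
    (hσ : Stable G tb S (some m) d mdl σ)
    (hσ' : Stable G tb (S.erase t) (some m) d mdl σ') :
    ∀ v, v ≠ t → σ v = σ' v := by
  have hagree : ∀ R : List V, t ∉ R →
      rankNat G S (some m) mdl R = rankNat G (S.erase t) (some m) mdl R :=
    fun R hR => rank_agree G S (some m) mdl t hR
  have H : ∀ K : ℕ, ∀ v, v ≠ t →
      ((σ v ≠ [] ∧ rankNat G S (some m) mdl (σ v) ≤ K) ∨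
       (σ' v ≠ [] ∧ rankNat G (S.erase t) (some m) mdl (σ' v) ≤ K)) → σ v = σ' v := by
    intro K
    induction K using Nat.strong_induction_on with
    | _ K ih =>
      intro v hvt hc
      have IH : ∀ w, w ≠ t →
          ((σ w ≠ [] ∧ rankNat G S (some m) mdl (σ w) < K) ∨
           (σ' w ≠ [] ∧ rankNat G (S.erase t) (some m) mdl (σ' w) < K)) → σ w = σ' w := by
        intro w hwt hw
        rcases hw with ⟨a, b⟩ | ⟨a, b⟩
        · exact ih _ b w hwt (Or.inl ⟨a, le_refl _⟩)
        · exact ih _ b w hwt (Or.inr ⟨a, le_refl _⟩)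
      rcases hc with ⟨hne, hK⟩ | ⟨hne, hK⟩
      · exact oneStep hstub hdt hmt hσ hσ' hagree K IH hvt hne hK
      · exact (oneStep hstub hdt hmt hσ' hσ (fun R hR => (hagree R hR).symm) K
          (fun w hwt hw => (IH w hwt hw.symm).symm) hvt hne hK).symm
  intro v hvt
  by_cases h1 : σ v = []
  · by_cases h2 : σ' v = []
    · rw [h1, h2]
    · exact H _ v hvt (Or.inr ⟨h2, le_refl _⟩)
  · exact H _ v hvt (Or.inl ⟨h1, le_refl _⟩)


end SBGP
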